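/- Suppose the sink Z is nonempty and V∖Z is finite. Then for every a ∈ V, the map ρ ↦ σ(a,Z;ρ) is a bijection from SF(Z) to SF(Z); consequently, if ρ is sampled from the uniform probability measure OUSF(Z) on SF(Z), then the final rotor configuration σ(a,Z;ρ) also has law OUSF(Z). -/

import Mathlib

open Classical

set_option linter.unusedSectionVars false
set_option linter.unusedVariables false
set_option maxHeartbeats 1000000

universe u

variable {V : Type u}

/-- A rotor mechanism: for each vertex `x`, `τ x` restricts to a bijection of the
neighbor set of `x` having a single orbit. -/
def IsMechanism (G : SimpleGraph V) (τ : V → V → V) : Prop :=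
  ∀ x : V, Set.BijOn (τ x) (G.neighborSet x) (G.neighborSet x) ∧
    ∀ y ∈ G.neighborSet x, ∀ z ∈ G.neighborSet x, ∃ i : ℕ, (τ x)^[i] y = z

/-- One step of the rotor walk with sink `Z`; the walk freezes once it reaches `Z`. -/
noncomputable def rotorStep [DecidableEq V] (τ : V → V → V) (Z : Set V) :
    V × (V → V) → V × (V → V) := fun p =>
  if p.1 ∈ Z then p
  else (τ p.1 (p.2 p.1), Function.update p.2 p.1 (τ p.1 (p.2 p.1)))

/-- The rotor walk with initial location `a`, sink `Z` and initial rotor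
configuration `ρ`: position (first component) and rotor configuration
(second component) at time `t`. -/
noncomputable def rotorWalk [DecidableEq V] (τ : V → V → V) (Z : Set V)
    (a : V) (ρ : V → V) (t : ℕ) : V × (V → V) :=
  (rotorStep τ Z)^[t] (a, ρ)

/-- `Z`-oriented spanning forests of `G`, viewed as rotor configurations,
normalized to be the identity on `Z` (the values on `Z` are inconsequential). -/
def SFset (G : SimpleGraph V) (Z : Set V) : Set (V → V) :=
  {ρ | (∀ x ∉ Z, G.Adj x (ρ x)) ∧ (∀ x : V, ∃ ℓ : ℕ, ρ^[ℓ] x ∈ Z) ∧ ∀ x ∈ Z, ρ x = x}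

/-- The eventual value of an eventually-constant sequence. -/
noncomputable def eventualVal (f : ℕ → V) : V :=
  if h : ∃ t : ℕ, ∀ s : ℕ, t ≤ s → f s = f t then f h.choose else f 0

/-- The final rotor configuration `σ(a, Z; ρ)` of the rotor walk. -/
noncomputable def finalConfig [DecidableEq V] (τ : V → V → V) (Z : Set V)
    (a : V) (ρ : V → V) : V → V :=
  fun x => eventualVal fun t => (rotorWalk τ Z a ρ t).2 x

/-- `ξ_i(a_0, …, a_{i-1}, Z; ρ)`: the rotor configuration after `i` successive
walkers, started at `a_0, …, a_{i-1}`, have performed rotor walks with sink `Z`. -/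
noncomputable def xiConfig [DecidableEq V] (τ : V → V → V) (Z : Set V) (av : ℕ → V) :
    ℕ → (V → V) → (V → V)
  | 0, ρ => ρ
  | i + 1, ρ => finalConfig τ Z (av i) (xiConfig τ Z av i ρ)

/-- The set of times at which the rotor walk (run until it first reaches the
sink `Z`) is at a vertex of `W`; its cardinality is the odometer `u(a,Z;ρ)(W)`. -/
def visitTimes [DecidableEq V] (τ : V → V → V) (Z : Set V) (a : V) (ρ : V → V)
    (W : Set V) : Set ℕ :=
  {t | (rotorWalk τ Z a ρ t).1 ∈ W ∧ ∀ s < t, (rotorWalk τ Z a ρ s).1 ∉ Z}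

/-- The event `E_{r,W}(a,Z)`: the rotor walk with initial location `a` and sink `Z`
visits `W` some time after visiting a vertex at graph distance at least `r` from `W`. -/
def Eset [DecidableEq V] (G : SimpleGraph V) (τ : V → V → V) (r : ℕ) (W : Set V)
    (a : V) (Z : Set V) : Set (V → V) :=
  {ρ | ∃ t₁ t₂ : ℕ, t₁ < t₂ ∧ (∀ s < t₂, (rotorWalk τ Z a ρ s).1 ∉ Z) ∧
    (∀ w ∈ W, r ≤ G.dist w (rotorWalk τ Z a ρ t₁).1) ∧ (rotorWalk τ Z a ρ t₂).1 ∈ W}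

/-- The event `D_r` (relative to the set `Z`): there is an oriented path in `ρ`
from a vertex at graph distance exactly `r` from `Z` to a vertex of `Z`. -/
def Dset (G : SimpleGraph V) (Z : Set V) (r : ℕ) : Set (V → V) :=
  {ρ | ∃ x : V, ∃ ℓ : ℕ, (∀ w ∈ Z, r ≤ G.dist w x) ∧ (∃ w ∈ Z, G.dist w x = r) ∧
    ρ^[ℓ] x ∈ Z}

/-- The transition matrix `P_Z` of simple random walk on `G` killed upon hitting `Z`. -/
noncomputable def killedP (G : SimpleGraph V) [∀ v : V, Fintype (G.neighborSet v)]
    (Z : Set V) : Matrix {x : V // x ∉ Z} {x : V // x ∉ Z} ℝ :=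
  fun x y => if G.Adj x.1 y.1 then (1 : ℝ) / (G.degree x.1) else 0

/-- The Green function `((I - P_Z)⁻¹)_{a,x}` of simple random walk killed at `Z`,
as a function of a pair of vertices (zero if `V ∖ Z` is infinite or `a ∈ Z` or `x ∈ Z`). -/
noncomputable def greenFn (G : SimpleGraph V) [DecidableEq V]
    [∀ v : V, Fintype (G.neighborSet v)] (Z : Set V) (a x : V) : ℝ :=
  if h : ({y : V | y ∉ Z}).Finite ∧ a ∉ Z ∧ x ∉ Z then
    letI : Fintype {y : V // y ∉ Z} := h.1.fintype
    ((1 - killedP G Z)⁻¹) ⟨a, h.2.1⟩ ⟨x, h.2.2⟩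
  else 0

section Aux

variable [DecidableEq V] (τ : V → V → V) (Z : Set V) (a : V) (ρ : V → V)

/-! ### pure iterate lemmas -/

lemma iterate_update_eq (f : V → V) (x c v : V) :
    ∀ k : ℕ, (∀ j < k, f^[j] v ≠ x) → (Function.update f x c)^[k] v = f^[k] v := by
  intro k
  induction k with
  | zero => intro _; rfl
  | succ k ih =>
    intro h
    rw [Function.iterate_succ_apply', Function.iterate_succ_apply',
      ih (fun j hj => h j (Nat.lt_succ_of_lt hj)),
      Function.update_of_ne (h k (Nat.lt_succ_self k))]

lemma iterate_fixed_mod (f : V → V) (v : V) (p : ℕ) (h : f^[p] v = v)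
    (m : ℕ) : f^[m] v = f^[m % p] v := by
  have key : ∀ q r : ℕ, f^[p * q + r] v = f^[r] v := by
    intro q
    induction q with
    | zero => simp
    | succ q ih =>
      intro r
      rw [show p * (q+1) + r = (p*q + r) + p by ring, Function.iterate_add_apply, h]
      exact ih r
  conv_lhs => rw [← Nat.div_add_mod m p]
  exact key (m / p) (m % p)

/-! ### walk basics -/

lemma rotorWalk_zero : rotorWalk τ Z a ρ 0 = (a, ρ) := rfl

lemma rotorWalk_succ (t : ℕ) :
    rotorWalk τ Z a ρ (t+1) = rotorStep τ Z (rotorWalk τ Z a ρ t) :=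
  Function.iterate_succ_apply' _ _ _

lemma rotorStep_mem {p : V × (V → V)} (hp : p.1 ∈ Z) : rotorStep τ Z p = p := if_pos hp

lemma rotorStep_not_mem {p : V × (V → V)} (hp : p.1 ∉ Z) :
    rotorStep τ Z p = (τ p.1 (p.2 p.1), Function.update p.2 p.1 (τ p.1 (p.2 p.1))) :=
  if_neg hp

lemma walk_frozen {T : ℕ} (hT : (rotorWalk τ Z a ρ T).1 ∈ Z) :
    ∀ s, T ≤ s → rotorWalk τ Z a ρ s = rotorWalk τ Z a ρ T := by
  have key : ∀ d, rotorWalk τ Z a ρ (T + d) = rotorWalk τ Z a ρ T := by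
    intro d
    induction d with
    | zero => rfl
    | succ d ih =>
      rw [show T + (d+1) = (T+d) + 1 by omega, rotorWalk_succ, ih, rotorStep_mem τ Z hT]
  intro s hs
  obtain ⟨d, rfl⟩ := Nat.exists_eq_add_of_le hs
  exact key d

lemma eventualVal_eq {f : ℕ → V} {T : ℕ} (h : ∀ s, T ≤ s → f s = f T) :
    eventualVal f = f T := by
  have hex : ∃ t : ℕ, ∀ s : ℕ, t ≤ s → f s = f t := ⟨T, h⟩
  rw [eventualVal, dif_pos hex]
  have h1 := hex.choose_spec (max hex.choose T) (le_max_left _ _)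
  have h2 := h (max hex.choose T) (le_max_right _ _)
  rw [← h1, h2]

lemma finalConfig_eq {T : ℕ} (hT : (rotorWalk τ Z a ρ T).1 ∈ Z) :
    finalConfig τ Z a ρ = (rotorWalk τ Z a ρ T).2 := by
  funext x
  exact eventualVal_eq (fun s hs => by rw [walk_frozen τ Z a ρ hT s hs])

lemma cfg_adj {G : SimpleGraph V} (hτ : IsMechanism G τ)
    (hadj : ∀ x ∉ Z, ρ x ∈ G.neighborSet x) :
    ∀ t, ∀ x ∉ Z, (rotorWalk τ Z a ρ t).2 x ∈ G.neighborSet x := by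
  intro t
  induction t with
  | zero => exact hadj
  | succ t ih =>
    intro x hx
    rw [rotorWalk_succ]
    by_cases hq : (rotorWalk τ Z a ρ t).1 ∈ Z
    · rw [rotorStep_mem τ Z hq]; exact ih x hx
    · rw [rotorStep_not_mem τ Z hq]
      dsimp only
      by_cases hxx : x = (rotorWalk τ Z a ρ t).1
      · rw [hxx, Function.update_self]
        exact (hτ _).1.mapsTo (ih _ (hxx ▸ hx))
      · rw [Function.update_of_ne hxx]
        exact ih x hx

lemma cfg_mem_Z : ∀ t, ∀ x ∈ Z, (rotorWalk τ Z a ρ t).2 x = ρ x := by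
  intro t
  induction t with
  | zero => intro x _; rfl
  | succ t ih =>
    intro x hx
    rw [rotorWalk_succ]
    by_cases hq : (rotorWalk τ Z a ρ t).1 ∈ Z
    · rw [rotorStep_mem τ Z hq]; exact ih x hx
    · rw [rotorStep_not_mem τ Z hq]
      dsimp only
      rw [Function.update_of_ne (by rintro rfl; exact hq hx)]
      exact ih x hx

/-! ### termination -/

lemma infinite_of_unbounded {S : Set ℕ} (h : ∀ n, ∃ t, n ≤ t ∧ t ∈ S) : S.Infinite := by
  intro hfin
  obtain ⟨b, hb⟩ := hfin.bddAbove
  obtain ⟨t, hbt, htS⟩ := h (b+1)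
  have := hb htS
  omega

lemma unbounded_of_infinite {S : Set ℕ} (hinf : S.Infinite) (n : ℕ) :
    ∃ t, n ≤ t ∧ t ∈ S := by
  by_contra h
  push_neg at h
  exact hinf ((Set.finite_Iio n).subset (fun t ht => by
    by_contra hlt
    simp only [Set.mem_Iio, not_lt] at hlt
    exact h t hlt ht))

lemma cfg_between (x : V) (t : ℕ) :
    ∀ d, (∀ u, t ≤ u → u < t + d → (rotorWalk τ Z a ρ u).1 ≠ x) →
      (rotorWalk τ Z a ρ (t+d)).2 x = (rotorWalk τ Z a ρ t).2 x := by
  intro d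
  induction d with
  | zero => intro _; rfl
  | succ d ih =>
    intro h
    rw [show t + (d+1) = (t+d) + 1 by omega, rotorWalk_succ]
    by_cases hq : (rotorWalk τ Z a ρ (t+d)).1 ∈ Z
    · rw [rotorStep_mem τ Z hq]
      exact ih (fun u hu1 hu2 => h u hu1 (by omega))
    · rw [rotorStep_not_mem τ Z hq]
      dsimp only
      rw [Function.update_of_ne ?_]
      · exact ih (fun u hu1 hu2 => h u hu1 (by omega))
      · intro hxe
        exact h (t+d) (by omega) (by omega) hxe.symm

lemma next_visit {x : V} (hinf : {u | (rotorWalk τ Z a ρ u).1 = x}.Infinite) (t : ℕ) :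
    ∃ t', t < t' ∧ (rotorWalk τ Z a ρ t').1 = x ∧
      ∀ u, t < u → u < t' → (rotorWalk τ Z a ρ u).1 ≠ x := by
  have hex : ∃ s, t < s ∧ (rotorWalk τ Z a ρ s).1 = x := by
    obtain ⟨s, hs1, hs2⟩ := unbounded_of_infinite hinf (t+1)
    exact ⟨s, by omega, hs2⟩
  refine ⟨Nat.find hex, (Nat.find_spec hex).1, (Nat.find_spec hex).2, ?_⟩
  intro u hu1 hu2 hux
  exact Nat.find_min hex hu2 ⟨hu1, hux⟩

lemma fire_iter (hall : ∀ u, (rotorWalk τ Z a ρ u).1 ∉ Z) {x : V}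
    (hinf : {u | (rotorWalk τ Z a ρ u).1 = x}.Infinite) :
    ∀ (i : ℕ) (t : ℕ), (rotorWalk τ Z a ρ t).1 = x →
      ∃ t', t ≤ t' ∧ (rotorWalk τ Z a ρ t').1 = x ∧
        (rotorWalk τ Z a ρ t').2 x = (τ x)^[i] ((rotorWalk τ Z a ρ t).2 x) := by
  intro i
  induction i with
  | zero => intro t ht; exact ⟨t, le_rfl, ht, rfl⟩
  | succ i ih =>
    intro t ht
    obtain ⟨t', ht'1, ht'2, ht'3⟩ := ih t ht
    obtain ⟨t'', ht''1, ht''2, ht''3⟩ := next_visit τ Z a ρ hinf t'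
    refine ⟨t'', by omega, ht''2, ?_⟩
    -- config at x after the firing at time t'
    have hstep : (rotorWalk τ Z a ρ (t'+1)).2 x = τ x ((rotorWalk τ Z a ρ t').2 x) := by
      rw [rotorWalk_succ, rotorStep_not_mem τ Z (hall t')]
      dsimp only
      rw [ht'2, Function.update_self]
    have hconst : (rotorWalk τ Z a ρ t'').2 x = (rotorWalk τ Z a ρ (t'+1)).2 x := by
      have hd : t'' = (t'+1) + (t'' - (t'+1)) := by omega
      rw [hd]
      exact cfg_between τ Z a ρ x (t'+1) _ (fun u hu1 hu2 => ht''3 u (by omega) (by omega))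
    rw [hconst, hstep, ht'3, ← Function.iterate_succ_apply' (τ x) i]

lemma neighbor_inf {G : SimpleGraph V} (hτ : IsMechanism G τ)
    (hadj : ∀ x ∉ Z, ρ x ∈ G.neighborSet x)
    (hall : ∀ u, (rotorWalk τ Z a ρ u).1 ∉ Z) {x y : V}
    (hinf : {u | (rotorWalk τ Z a ρ u).1 = x}.Infinite)
    (hy : y ∈ G.neighborSet x) :
    {u | (rotorWalk τ Z a ρ u).1 = y}.Infinite := by
  apply infinite_of_unbounded
  intro n
  obtain ⟨t₀, hn, ht₀⟩ := unbounded_of_infinite hinf n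
  have hxZ : x ∉ Z := ht₀ ▸ hall t₀
  have hc : (rotorWalk τ Z a ρ t₀).2 x ∈ G.neighborSet x := cfg_adj τ Z a ρ hτ hadj t₀ x hxZ
  have hτc : τ x ((rotorWalk τ Z a ρ t₀).2 x) ∈ G.neighborSet x := (hτ x).1.mapsTo hc
  obtain ⟨i, hi⟩ := (hτ x).2 _ hτc _ hy
  obtain ⟨t', ht'1, ht'2, ht'3⟩ := fire_iter τ Z a ρ hall hinf i t₀ ht₀
  refine ⟨t' + 1, by omega, ?_⟩
  show (rotorWalk τ Z a ρ (t'+1)).1 = y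
  rw [rotorWalk_succ, rotorStep_not_mem τ Z (hall t')]
  dsimp only
  rw [ht'2, ht'3, ← Function.iterate_succ_apply' (τ x) i, Function.iterate_succ_apply, hi]

lemma exists_hit {G : SimpleGraph V} (hconn : G.Connected) (hτ : IsMechanism G τ)
    (hZne : Z.Nonempty) (hfin : (Zᶜ : Set V).Finite)
    (hadj : ∀ x ∉ Z, ρ x ∈ G.neighborSet x) :
    ∃ T, (rotorWalk τ Z a ρ T).1 ∈ Z := by
  by_contra hno
  push_neg at hno
  have hcov : ∀ t : ℕ, t ∈ ⋃ x ∈ (Zᶜ : Set V), {u | (rotorWalk τ Z a ρ u).1 = x} :=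
    fun t => Set.mem_biUnion (hno t) rfl
  have hpig : ∃ x ∈ (Zᶜ : Set V), {u | (rotorWalk τ Z a ρ u).1 = x}.Infinite := by
    by_contra hfa
    push_neg at hfa
    have hfin2 : (⋃ x ∈ (Zᶜ : Set V), {u | (rotorWalk τ Z a ρ u).1 = x}).Finite :=
      Set.Finite.biUnion hfin (fun x hx => hfa x hx)
    exact Set.infinite_univ (hfin2.subset (fun t _ => hcov t))
  obtain ⟨x₀, hx₀c, hx₀inf⟩ := hpig
  obtain ⟨z, hz⟩ := hZne
  have key : ∀ {u z' : V} (w : G.Walk u z'), z' ∈ Z →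
      {t | (rotorWalk τ Z a ρ t).1 = u}.Infinite → False := by
    intro u z' w
    induction w with
    | nil =>
      intro hz' hinf
      obtain ⟨t, _, ht⟩ := unbounded_of_infinite hinf 0
      exact hno t (ht ▸ hz')
    | cons hadje p ih =>
      intro hz' hinf
      exact ih hz' (neighbor_inf τ Z a ρ hτ hadj hno hinf
        ((SimpleGraph.mem_neighborSet _ _ _).2 hadje))
  exact (hconn.preconnected x₀ z).elim (fun w => key w hz hx₀inf)

/-! ### the forest invariant -/

def GoodSt [DecidableEq V] (Z : Set V) (a : V) (p : V × (V → V)) : Prop :=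
  (∀ v : V, ∃ ℓ : ℕ, p.2^[ℓ] v ∈ Z ∪ {p.1}) ∧
  (∃ s : ℕ, p.2^[s] a = p.1 ∧ ∀ u < s, p.2^[u] a ∉ Z ∪ {p.1})

lemma good_step {p : V × (V → V)} (hg : GoodSt Z a p) (hp : p.1 ∉ Z) :
    GoodSt Z a (rotorStep τ Z p) := by
  rw [rotorStep_not_mem τ Z hp]
  set x := p.1 with hx
  set η := p.2 with hη
  set y := τ x (η x) with hy
  set η' := Function.update η x y with hη'
  constructor
  · -- part (i)
    intro v
    have hex : ∃ ℓ, η^[ℓ] v ∈ Z ∪ {x} := hg.1 v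
    set ℓ₀ := Nat.find hex with hℓ₀
    have hspec := Nat.find_spec hex
    have hne : ∀ k < ℓ₀, η^[k] v ≠ x := by
      intro k hk hkx
      exact Nat.find_min hex hk (Or.inr hkx)
    have heq : η'^[ℓ₀] v = η^[ℓ₀] v := iterate_update_eq η x y v ℓ₀ hne
    rcases hspec with hin | hin
    · exact ⟨ℓ₀, Or.inl (heq ▸ hin)⟩
    · rw [Set.mem_singleton_iff] at hin
      refine ⟨ℓ₀ + 1, Or.inr ?_⟩
      rw [Function.iterate_succ_apply', heq, hin]
      show η' x ∈ {y}
      rw [hη', Function.update_self]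
      rfl
  · -- part (ii)
    obtain ⟨s, hs, hpre⟩ := hg.2
    have hne : ∀ u < s, η^[u] a ≠ x := fun u hu hux => hpre u hu (Or.inr hux)
    have heq : ∀ u ≤ s, η'^[u] a = η^[u] a := fun u hu =>
      iterate_update_eq η x y a u (fun j hj => hne j (by omega))
    have hsx : η'^[s] a = x := by rw [heq s le_rfl, hs]
    have hsy : η'^[s+1] a = y := by
      rw [Function.iterate_succ_apply', hsx]
      show Function.update η x y x = y
      rw [Function.update_self]
    have hexq : ∃ u, η'^[u] a = y := ⟨s+1, hsy⟩
    refine ⟨Nat.find hexq, Nat.find_spec hexq, ?_⟩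
    intro u hu
    rintro (huZ | huy)
    · have hus : u ≤ s := by
        have : Nat.find hexq ≤ s + 1 := Nat.find_le hsy
        omega
      rcases Nat.lt_or_ge u s with h1 | h1
      · exact hpre u h1 (Or.inl (by rwa [heq u hus] at huZ))
      · have : u = s := by omega
        subst this
        rw [hsx] at huZ
        exact hp huZ
    · rw [Set.mem_singleton_iff] at huy
      exact Nat.find_min hexq hu huy

lemma good_all (hρ2 : ∀ v : V, ∃ ℓ : ℕ, ρ^[ℓ] v ∈ Z) :
    ∀ t, (∀ s < t, (rotorWalk τ Z a ρ s).1 ∉ Z) → GoodSt Z a (rotorWalk τ Z a ρ t) := by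
  intro t
  induction t with
  | zero =>
    intro _
    constructor
    · exact fun v => (hρ2 v).imp (fun ℓ h => Or.inl h)
    · exact ⟨0, rfl, by omega⟩
  | succ t ih =>
    intro h
    rw [rotorWalk_succ]
    exact good_step τ Z a (ih (fun s hs => h s (by omega))) (h t (by omega))

/-! ### uniqueness of the predecessor state -/

lemma unique_core (y : V) (η' : V → V) (w₁ w₂ c₁ : V)
    (hw : w₁ ≠ w₂) (hw₂Z : w₂ ∉ Z)
    (h₁ : η' w₁ = y) (h₂ : η' w₂ = y)
    (g₁ : ∃ ℓ, (Function.update η' w₁ c₁)^[ℓ] y ∈ Z ∪ {w₁})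
    {s₁ s₂ : ℕ} (hs : s₁ < s₂)
    (e₁ : η'^[s₁] a = w₁) (f₁ : ∀ u < s₁, η'^[u] a ∉ Z ∪ {w₁})
    (e₂ : η'^[s₂] a = w₂) (f₂ : ∀ u < s₂, η'^[u] a ∉ Z ∪ {w₂}) : False := by
  set f : ℕ → V := fun u => η'^[u] a with hf
  have fsucc : ∀ u, f (u+1) = η' (f u) := fun u => Function.iterate_succ_apply' η' u a
  have hy1 : f (s₁+1) = y := by rw [fsucc, hf]; dsimp only; rw [e₁, h₁]
  have hy2 : f (s₂+1) = y := by rw [fsucc, hf]; dsimp only; rw [e₂, h₂]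
  -- periodicity with period s₂ - s₁ from index s₁+1 on
  have hper : ∀ d, f (s₁ + 1 + d + (s₂ - s₁)) = f (s₁ + 1 + d) := by
    intro d
    induction d with
    | zero =>
      rw [show s₁ + 1 + 0 + (s₂ - s₁) = s₂ + 1 by omega, show s₁ + 1 + 0 = s₁ + 1 by omega,
        hy1, hy2]
    | succ d ih =>
      rw [show s₁ + 1 + (d+1) + (s₂ - s₁) = (s₁ + 1 + d + (s₂ - s₁)) + 1 by omega,
        fsucc, ih, show s₁ + 1 + (d+1) = (s₁ + 1 + d) + 1 by omega, fsucc]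
  -- the window [s₁+1, s₂] avoids Z
  have hZwin : ∀ u ≤ s₂, f u ∉ Z := by
    intro u hu
    rcases Nat.lt_or_ge u s₂ with h | h
    · exact fun hZ => f₂ u h (Or.inl hZ)
    · have : u = s₂ := by omega
      subst this
      rw [hf]; dsimp only; rw [e₂]; exact hw₂Z
  -- f is injective on the window
  have hinj : ∀ u v, s₁ + 1 ≤ u → u < v → v ≤ s₂ → f u ≠ f v := by
    intro u v hu huv hv heqv
    have hper2 : ∀ d, f (u + d + (v - u)) = f (u + d) := by
      intro d
      induction d with
      | zero =>
        rw [show u + 0 + (v - u) = v by omega, show u + 0 = u by omega]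
        exact heqv.symm
      | succ d ih =>
        rw [show u + (d+1) + (v - u) = (u + d + (v - u)) + 1 by omega, fsucc, ih,
          show u + (d+1) = (u + d) + 1 by omega, fsucc]
    have h9 := hper2 (s₂ - (v - u) - u)
    rw [show u + (s₂ - (v - u) - u) + (v - u) = s₂ by omega,
      show u + (s₂ - (v - u) - u) = s₂ - (v - u) by omega] at h9
    have h10 : s₂ - (v - u) < s₂ := by omega
    apply f₂ (s₂ - (v - u)) h10
    show f (s₂ - (v - u)) ∈ Z ∪ {w₂}
    rw [← h9, hf]; dsimp only; rw [e₂]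
    exact Or.inr rfl
  -- w₁ does not occur in the window
  have hw1win : ∀ u, s₁ + 1 ≤ u → u ≤ s₂ → f u ≠ w₁ := by
    intro u hu1 hu2 hfu
    rcases Nat.lt_or_ge u s₂ with hlt | hge
    · have h5 : f (u+1) = y := by rw [fsucc, hfu, h₁]
      rcases Nat.lt_trichotomy (s₁+1) (u+1) with h6 | h6 | h6
      · exact hinj (s₁+1) (u+1) le_rfl h6 (by omega) (by rw [hy1, h5])
      · omega
      · omega
    · have : u = s₂ := by omega
      subst this
      apply hw
      rw [← hfu, hf]; dsimp only; rw [e₂]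
  -- every later index has a window representative
  have hwin : ∀ m, s₁ + 1 ≤ m → ∃ u, s₁ + 1 ≤ u ∧ u ≤ s₂ ∧ f m = f u := by
    intro m
    induction m using Nat.strong_induction_on with
    | _ m ih =>
      intro hm
      rcases le_or_gt m s₂ with h | h
      · exact ⟨m, hm, h, rfl⟩
      · have h6 : s₁ + 1 ≤ m - (s₂ - s₁) := by omega
        have h7 : m - (s₂ - s₁) < m := by omega
        obtain ⟨u, h8, h9, h10⟩ := ih _ h7 h6
        refine ⟨u, h8, h9, ?_⟩
        have h11 := hper (m - (s₂ - s₁) - (s₁ + 1))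
        rw [show s₁ + 1 + (m - (s₂ - s₁) - (s₁ + 1)) = m - (s₂ - s₁) by omega,
          show m - (s₂ - s₁) + (s₂ - s₁) = m by omega] at h11
        rw [h11, h10]
  -- the trajectory of η' from y
  have traj : ∀ k, η'^[k] y = f (s₁ + 1 + k) := by
    intro k
    induction k with
    | zero => rw [show s₁ + 1 + 0 = s₁ + 1 by omega, hy1]; rfl
    | succ k ih =>
      rw [Function.iterate_succ_apply', ih,
        show s₁ + 1 + (k+1) = (s₁ + 1 + k) + 1 by omega, fsucc]
  have havoid : ∀ k, η'^[k] y ≠ w₁ := by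
    intro k
    obtain ⟨u, hu1, hu2, hu3⟩ := hwin (s₁ + 1 + k) (by omega)
    rw [traj k, hu3]
    exact hw1win u hu1 hu2
  obtain ⟨ℓ, hℓ⟩ := g₁
  have heqit : (Function.update η' w₁ c₁)^[ℓ] y = η'^[ℓ] y :=
    iterate_update_eq η' w₁ c₁ y ℓ (fun j _ => havoid j)
  rw [heqit] at hℓ
  obtain ⟨u, hu1, hu2, hu3⟩ := hwin (s₁ + 1 + ℓ) (by omega)
  have h12 : η'^[ℓ] y = f u := by rw [traj ℓ, hu3]
  rcases hℓ with hin | hin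
  · exact hZwin u hu2 (h12 ▸ hin)
  · rw [Set.mem_singleton_iff] at hin
    exact havoid ℓ hin

lemma unique_pred (y : V) (η' : V → V) {w₁ w₂ : V} (c₁ c₂ : V)
    (hw₁Z : w₁ ∉ Z) (hw₂Z : w₂ ∉ Z)
    (h₁ : η' w₁ = y) (h₂ : η' w₂ = y)
    (g₁ : ∃ ℓ, (Function.update η' w₁ c₁)^[ℓ] y ∈ Z ∪ {w₁})
    (g₂ : ∃ ℓ, (Function.update η' w₂ c₂)^[ℓ] y ∈ Z ∪ {w₂})
    (t₁ : ∃ s, η'^[s] a = w₁ ∧ ∀ u < s, η'^[u] a ∉ Z ∪ {w₁})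
    (t₂ : ∃ s, η'^[s] a = w₂ ∧ ∀ u < s, η'^[u] a ∉ Z ∪ {w₂}) : w₁ = w₂ := by
  by_contra hw
  obtain ⟨s₁, e₁, f₁⟩ := t₁
  obtain ⟨s₂, e₂, f₂⟩ := t₂
  rcases Nat.lt_trichotomy s₁ s₂ with h | h | h
  · exact unique_core Z a y η' w₁ w₂ c₁ hw hw₂Z h₁ h₂ g₁ h e₁ f₁ e₂ f₂
  · subst h
    exact hw (by rw [← e₁, ← e₂])
  · exact unique_core Z a y η' w₂ w₁ c₂ (Ne.symm hw) hw₁Z h₂ h₁ g₂ h e₂ f₂ e₁ f₁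

/-! ### injectivity -/

lemma inj_aux {G : SimpleGraph V} (hτ : IsMechanism G τ)
    {ρ₁ ρ₂ : V → V} (hρ₁ : ρ₁ ∈ SFset G Z) (hρ₂ : ρ₂ ∈ SFset G Z)
    {T T' : ℕ} (hT : (rotorWalk τ Z a ρ₁ T).1 ∈ Z)
    (hpre : ∀ s < T, (rotorWalk τ Z a ρ₁ s).1 ∉ Z)
    (hT' : (rotorWalk τ Z a ρ₂ T').1 ∈ Z)
    (hpre' : ∀ s < T', (rotorWalk τ Z a ρ₂ s).1 ∉ Z)
    (hle : T ≤ T')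
    (hσ : (rotorWalk τ Z a ρ₁ T).2 = (rotorWalk τ Z a ρ₂ T').2) : ρ₁ = ρ₂ := by
  obtain ⟨hA₁, hR₁, hI₁⟩ := hρ₁
  obtain ⟨hA₂, hR₂, hI₂⟩ := hρ₂
  have hadj₁ : ∀ x ∉ Z, ρ₁ x ∈ G.neighborSet x :=
    fun x hx => (SimpleGraph.mem_neighborSet _ _ _).2 (hA₁ x hx)
  have hadj₂ : ∀ x ∉ Z, ρ₂ x ∈ G.neighborSet x :=
    fun x hx => (SimpleGraph.mem_neighborSet _ _ _).2 (hA₂ x hx)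
  have hg : ∀ t, t ≤ T → GoodSt Z a (rotorWalk τ Z a ρ₁ t) :=
    fun t ht => good_all τ Z a ρ₁ hR₁ t (fun s hs => hpre s (by omega))
  have hg' : ∀ t, t ≤ T' → GoodSt Z a (rotorWalk τ Z a ρ₂ t) :=
    fun t ht => good_all τ Z a ρ₂ hR₂ t (fun s hs => hpre' s (by omega))
  -- the two walks stop at the same vertex of Z
  obtain ⟨s, hsv, hsp⟩ := (hg T le_rfl).2
  obtain ⟨s', hsv', hsp'⟩ := (hg' T' le_rfl).2
  rw [← hσ] at hsv' hsp'
  have hss : s = s' := by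
    rcases Nat.lt_trichotomy s s' with h | h | h
    · exact absurd (Or.inl (by rw [hsv]; exact hT)) (hsp' s h)
    · exact h
    · exact absurd (Or.inl (by rw [hsv']; exact hT')) (hsp s' h)
  have zeq : (rotorWalk τ Z a ρ₁ T).1 = (rotorWalk τ Z a ρ₂ T').1 := by
    rw [← hsv, hss, hsv']
  -- backward peeling of the two walks
  have peel : ∀ k, k ≤ T →
      rotorWalk τ Z a ρ₁ (T - k) = rotorWalk τ Z a ρ₂ (T' - k) := by
    intro k
    induction k with
    | zero =>
      intro _
      simp only [Nat.sub_zero]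
      exact Prod.ext zeq hσ
    | succ k ih =>
      intro hk1
      have IH := ih (by omega)
      rw [show T - k = (T - (k+1)) + 1 by omega,
        show T' - k = (T' - (k+1)) + 1 by omega] at IH
      set t := T - (k+1) with hts
      set t' := T' - (k+1) with hts'
      have hxt : (rotorWalk τ Z a ρ₁ t).1 ∉ Z := hpre t (by omega)
      have hxt' : (rotorWalk τ Z a ρ₂ t').1 ∉ Z := hpre' t' (by omega)
      set q := rotorWalk τ Z a ρ₁ t with hq
      set q' := rotorWalk τ Z a ρ₂ t' with hq'
      set P := rotorWalk τ Z a ρ₁ (t+1) with hP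
      have hstep : P = (τ q.1 (q.2 q.1), Function.update q.2 q.1 (τ q.1 (q.2 q.1))) := by
        rw [hP, rotorWalk_succ τ Z a ρ₁ t, ← hq, rotorStep_not_mem τ Z hxt]
      have hstep' : P = (τ q'.1 (q'.2 q'.1),
          Function.update q'.2 q'.1 (τ q'.1 (q'.2 q'.1))) := by
        rw [IH, rotorWalk_succ τ Z a ρ₂ t', ← hq', rotorStep_not_mem τ Z hxt']
      have hP1 : P.1 = τ q.1 (q.2 q.1) := by rw [hstep]
      have hP2 : P.2 = Function.update q.2 q.1 (τ q.1 (q.2 q.1)) := by rw [hstep]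
      have hP1' : P.1 = τ q'.1 (q'.2 q'.1) := by rw [hstep']
      have hP2' : P.2 = Function.update q'.2 q'.1 (τ q'.1 (q'.2 q'.1)) := by rw [hstep']
      have hval : P.2 q.1 = P.1 := by rw [hP2, hP1, Function.update_self]
      have hval' : P.2 q'.1 = P.1 := by rw [hP2', hP1', Function.update_self]
      have hback : Function.update P.2 q.1 (q.2 q.1) = q.2 := by
        rw [hP2, Function.update_idem, Function.update_eq_self]
      have hback' : Function.update P.2 q'.1 (q'.2 q'.1) = q'.2 := by
        rw [hP2', Function.update_idem, Function.update_eq_self]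
      have hgt := hg t (by omega)
      have hgt' := hg' t' (by omega)
      have g₁ : ∃ ℓ, (Function.update P.2 q.1 (q.2 q.1))^[ℓ] P.1 ∈ Z ∪ {q.1} := by
        rw [hback]; exact hgt.1 P.1
      have g₂ : ∃ ℓ, (Function.update P.2 q'.1 (q'.2 q'.1))^[ℓ] P.1 ∈ Z ∪ {q'.1} := by
        rw [hback']; exact hgt'.1 P.1
      have t₁ : ∃ s, P.2^[s] a = q.1 ∧ ∀ u < s, P.2^[u] a ∉ Z ∪ {q.1} := by
        obtain ⟨sb, hs1, hs2⟩ := hgt.2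
        have he : ∀ u ≤ sb, P.2^[u] a = q.2^[u] a := by
          intro u hu
          rw [hP2]
          exact iterate_update_eq q.2 q.1 _ a u
            (fun j hj hjx => hs2 j (by omega) (Or.inr hjx))
        exact ⟨sb, by rw [he sb le_rfl, hs1], fun u hu => by
          rw [he u (by omega)]; exact hs2 u hu⟩
      have t₂ : ∃ s, P.2^[s] a = q'.1 ∧ ∀ u < s, P.2^[u] a ∉ Z ∪ {q'.1} := by
        obtain ⟨sb, hs1, hs2⟩ := hgt'.2
        have he : ∀ u ≤ sb, P.2^[u] a = q'.2^[u] a := by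
          intro u hu
          rw [hP2']
          exact iterate_update_eq q'.2 q'.1 _ a u
            (fun j hj hjx => hs2 j (by omega) (Or.inr hjx))
        exact ⟨sb, by rw [he sb le_rfl, hs1], fun u hu => by
          rw [he u (by omega)]; exact hs2 u hu⟩
      have hww : q.1 = q'.1 :=
        unique_pred Z a P.1 P.2 (q.2 q.1) (q'.2 q'.1) hxt hxt' hval hval' g₁ g₂ t₁ t₂
      have hc : q.2 q.1 = q'.2 q'.1 := by
        apply (hτ q.1).1.injOn
        · exact cfg_adj τ Z a ρ₁ hτ hadj₁ t q.1 hxt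
        · rw [hww]; exact cfg_adj τ Z a ρ₂ hτ hadj₂ t' q'.1 hxt'
        · rw [← hP1, hP1', hww]
      have hcfg : q.2 = q'.2 := by rw [← hback, ← hback', hc, hww]
      exact Prod.ext hww hcfg
  -- conclude
  have h0 := peel T le_rfl
  rw [Nat.sub_self] at h0
  cases hTT : T' - T with
  | zero =>
    rw [hTT] at h0
    exact congrArg Prod.snd h0
  | succ e =>
    rw [hTT] at h0
    have he_lt : e < T' := by omega
    have hxe : (rotorWalk τ Z a ρ₂ e).1 ∉ Z := hpre' e he_lt
    have hstep : rotorWalk τ Z a ρ₂ (e+1) =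
        (τ (rotorWalk τ Z a ρ₂ e).1 ((rotorWalk τ Z a ρ₂ e).2 (rotorWalk τ Z a ρ₂ e).1),
          Function.update (rotorWalk τ Z a ρ₂ e).2 (rotorWalk τ Z a ρ₂ e).1
            (τ (rotorWalk τ Z a ρ₂ e).1 ((rotorWalk τ Z a ρ₂ e).2 (rotorWalk τ Z a ρ₂ e).1))) := by
      rw [rotorWalk_succ τ Z a ρ₂ e, rotorStep_not_mem τ Z hxe]
    rw [hstep] at h0
    set w := (rotorWalk τ Z a ρ₂ e).1 with hw
    set η := (rotorWalk τ Z a ρ₂ e).2 with hη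
    have ha : a = τ w (η w) := congrArg Prod.fst h0
    have hρe : ρ₁ = Function.update η w (τ w (η w)) := congrArg Prod.snd h0
    have hρupd : ρ₁ = Function.update η w a := by rw [hρe, ← ha]
    have hρw : ρ₁ w = a := by rw [hρupd, Function.update_self]
    obtain ⟨sb, hs1, hs2⟩ := (hg' e (by omega)).2
    have he2 : ∀ u ≤ sb, ρ₁^[u] a = η^[u] a := by
      intro u hu
      rw [hρupd]
      exact iterate_update_eq η w a a u (fun j hj hjx => hs2 j (by omega) (Or.inr hjx))
    have hrs : ρ₁^[sb] a = w := by rw [he2 sb le_rfl, hs1]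
    have hfix : ρ₁^[sb+1] a = a := by rw [Function.iterate_succ_apply', hrs, hρw]
    obtain ⟨ℓ, hℓ⟩ := hR₁ a
    rw [iterate_fixed_mod ρ₁ a (sb+1) hfix ℓ] at hℓ
    have hrle : ℓ % (sb+1) ≤ sb := by
      have := Nat.mod_lt ℓ (show 0 < sb+1 by omega)
      omega
    rcases lt_or_eq_of_le hrle with h | h
    · refine absurd (Or.inl ?_) (hs2 (ℓ % (sb+1)) h)
      rw [← he2 _ (by omega)]
      exact hℓ
    · rw [h, hrs] at hℓ
      exact absurd hℓ hxe

/-! ### the map sends forests to forests -/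

lemma maps_to_SF {G : SimpleGraph V} (hconn : G.Connected) (hτ : IsMechanism G τ)
    (hZne : Z.Nonempty) (hfin : (Zᶜ : Set V).Finite)
    (hρ : ρ ∈ SFset G Z) : finalConfig τ Z a ρ ∈ SFset G Z := by
  obtain ⟨hA, hR, hI⟩ := hρ
  have hadj : ∀ x ∉ Z, ρ x ∈ G.neighborSet x :=
    fun x hx => (SimpleGraph.mem_neighborSet _ _ _).2 (hA x hx)
  have hex := exists_hit τ Z a ρ hconn hτ hZne hfin hadj
  have hTZ : (rotorWalk τ Z a ρ (Nat.find hex)).1 ∈ Z := Nat.find_spec hex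
  have hpre : ∀ s < Nat.find hex, (rotorWalk τ Z a ρ s).1 ∉ Z :=
    fun s hs => Nat.find_min hex hs
  rw [finalConfig_eq τ Z a ρ hTZ]
  refine ⟨?_, ?_, ?_⟩
  · intro x hx
    exact (SimpleGraph.mem_neighborSet _ _ _).1 (cfg_adj τ Z a ρ hτ hadj _ x hx)
  · intro v
    obtain ⟨ℓ, hℓ⟩ := (good_all τ Z a ρ hR _ hpre).1 v
    refine ⟨ℓ, ?_⟩
    rcases hℓ with h | h
    · exact h
    · rw [Set.mem_singleton_iff] at h
      rw [h]; exact hTZ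
  · intro x hx
    rw [cfg_mem_Z τ Z a ρ _ x hx]
    exact hI x hx

/-! ### finiteness of the set of forests -/

lemma sf_finite (G : SimpleGraph V) [∀ v : V, Fintype (G.neighborSet v)]
    (hfin : (Zᶜ : Set V).Finite) : (SFset G Z).Finite := by
  have hmem : ∀ (ρ : ↥(SFset G Z)) (x : hfin.toFinset),
      (ρ : V → V) (x : V) ∈ G.neighborSet (x : V) := by
    intro ρ x
    have hx : (x : V) ∈ (Zᶜ : Set V) := (Set.Finite.mem_toFinset hfin).1 x.2
    exact (SimpleGraph.mem_neighborSet _ _ _).2 (ρ.2.1 (x : V) hx)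
  have hF : Finite ↥(SFset G Z) := by
    let F : ↥(SFset G Z) → (∀ x : hfin.toFinset, G.neighborSet (x : V)) :=
      fun ρ x => ⟨(ρ : V → V) (x : V), hmem ρ x⟩
    have hFi : Function.Injective F := by
      intro ρ₁ ρ₂ h
      apply Subtype.ext
      funext x
      by_cases hx : x ∈ Z
      · rw [ρ₁.2.2.2 x hx, ρ₂.2.2.2 x hx]
      · have hxs : x ∈ hfin.toFinset := (Set.Finite.mem_toFinset hfin).2 hx
        exact congrArg Subtype.val (congrFun h ⟨x, hxs⟩)
    exact Finite.of_injective F hFi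
  exact Set.toFinite _

end Aux

/-- If `Z` is nonempty with `V ∖ Z` finite, then `ρ ↦ σ(a,Z;ρ)` is a
bijection from `SF(Z)` to `SF(Z)`; consequently the uniform measure `OUSF(Z)` is
preserved by the final-configuration map. -/
theorem stmt4 {V : Type u} [DecidableEq V] (G : SimpleGraph V) (hconn : G.Connected)
    [∀ v : V, Fintype (G.neighborSet v)] (τ : V → V → V) (hτ : IsMechanism G τ)
    (Z : Set V) (hZ : Z.Nonempty) (hfin : (Zᶜ : Set V).Finite) (a : V) :
    Set.BijOn (finalConfig τ Z a) (SFset G Z) (SFset G Z) := by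
  have hSF : (SFset G Z).Finite := sf_finite Z G hfin
  have hmaps : Set.MapsTo (finalConfig τ Z a) (SFset G Z) (SFset G Z) :=
    fun ρ hρ => maps_to_SF τ Z a ρ hconn hτ hZ hfin hρ
  have hinj : Set.InjOn (finalConfig τ Z a) (SFset G Z) := by
    intro ρ₁ hρ₁ ρ₂ hρ₂ h
    have hadj₁ : ∀ x ∉ Z, ρ₁ x ∈ G.neighborSet x := fun x hx =>
      (SimpleGraph.mem_neighborSet _ _ _).2 (hρ₁.1 x hx)
    have hadj₂ : ∀ x ∉ Z, ρ₂ x ∈ G.neighborSet x := fun x hx =>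
      (SimpleGraph.mem_neighborSet _ _ _).2 (hρ₂.1 x hx)
    have hex₁ := exists_hit τ Z a ρ₁ hconn hτ hZ hfin hadj₁
    have hex₂ := exists_hit τ Z a ρ₂ hconn hτ hZ hfin hadj₂
    have hT₁ := Nat.find_spec hex₁
    have hT₂ := Nat.find_spec hex₂
    have hp₁ : ∀ s < Nat.find hex₁, (rotorWalk τ Z a ρ₁ s).1 ∉ Z :=
      fun s hs => Nat.find_min hex₁ hs
    have hp₂ : ∀ s < Nat.find hex₂, (rotorWalk τ Z a ρ₂ s).1 ∉ Z :=
      fun s hs => Nat.find_min hex₂ hs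
    have hσ : (rotorWalk τ Z a ρ₁ (Nat.find hex₁)).2
        = (rotorWalk τ Z a ρ₂ (Nat.find hex₂)).2 := by
      rw [← finalConfig_eq τ Z a ρ₁ hT₁, ← finalConfig_eq τ Z a ρ₂ hT₂, h]
    rcases le_total (Nat.find hex₁) (Nat.find hex₂) with hle | hle
    · exact inj_aux τ Z a hτ hρ₁ hρ₂ hT₁ hp₁ hT₂ hp₂ hle hσ
    · exact (inj_aux τ Z a hτ hρ₂ hρ₁ hT₂ hp₂ hT₁ hp₁ hle hσ.symm).symm
  exact (Set.Finite.injOn_iff_bijOn_of_mapsTo hSF hmaps).1 hinj
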